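/- Conversely to the necessary divisibility conditions: for n = q+r, if J ∈ Z^{binom([q+r],r)} satisfies binom(q-i, r-i) | Σ{J_e : I ⊆ e} for all 0 ≤ i ≤ r and all i-subsets I of [q+r], then there exists Ψ ∈ Z^{binom([q+r],q)} with ∂Ψ = J. -/

import Mathlib

open Finset

/-- converse divisibility at `n = q+r`: if `J ∈ ℤ^{C([q+r],r)}`
satisfies `C(q-i,r-i) ∣ ∑{J_e : I ⊆ e}` for all `0 ≤ i ≤ r` and all `i`-subsets `I`,
then `J = ∂Ψ` for some integer vector `Ψ` on `q`-subsets of `[q+r]`. -/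
theorem stmt6 (q r : ℕ) (hqr : r < q) (hr : 1 ≤ r)
    (J : Finset (Fin (q + r)) → ℤ)
    (hdiv : ∀ I : Finset (Fin (q + r)), I.card ≤ r →
      ((q - I.card).choose (r - I.card) : ℤ) ∣
        ∑ e ∈ univ.filter (fun e : Finset (Fin (q + r)) => e.card = r ∧ I ⊆ e), J e) :
    ∃ Ψ : Finset (Fin (q + r)) → ℤ, ∀ e : Finset (Fin (q + r)), e.card = r →
      J e = ∑ Q ∈ univ.filter (fun Q : Finset (Fin (q + r)) => Q.card = q ∧ e ⊆ Q), Ψ Q := by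
  classical
  set S : Finset (Fin (q + r)) → ℤ := fun I =>
    ∑ e ∈ univ.filter (fun e : Finset (Fin (q + r)) => e.card = r ∧ I ⊆ e), J e with hSdef
  have hSzero : ∀ I : Finset (Fin (q + r)), r < I.card → S I = 0 := by
    intro I hI
    have : univ.filter (fun e : Finset (Fin (q + r)) => e.card = r ∧ I ⊆ e) = ∅ := by
      apply Finset.filter_false_of_mem
      rintro e - ⟨hec, hIe⟩
      have := Finset.card_le_card hIe
      omega
    simp [hSdef, this]
  have hdiv' : ∀ I : Finset (Fin (q + r)),
      ∃ t : ℤ, S I = ((q - I.card).choose (r - I.card) : ℤ) * t := by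
    intro I
    by_cases h : I.card ≤ r
    · exact hdiv I h
    · exact ⟨0, by rw [hSzero I (by omega)]; ring⟩
  choose T hT using hdiv'
  refine ⟨fun Q => ∑ I ∈ Qᶜ.powerset, (-1 : ℤ) ^ I.card * T I, ?_⟩
  intro e he
  symm
  have hec : eᶜ.card = q := by
    rw [Finset.card_compl, he]
    simp
  -- counting lemma
  have hcount : ∀ I : Finset (Fin (q + r)), I ⊆ eᶜ → I.card ≤ r →
      (univ.filter (fun Q : Finset (Fin (q + r)) =>
        (Q.card = q ∧ e ⊆ Q) ∧ I ⊆ Qᶜ)).card = (q - I.card).choose (r - I.card) := by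
    intro I hIe hIr
    have hcd : (eᶜ \ I).card = q - I.card := by rw [Finset.card_sdiff_of_subset hIe, hec]
    rw [← hcd, ← Finset.card_powersetCard]
    apply Finset.card_nbij' (fun Q => Qᶜ \ I) (fun A => (A ∪ I)ᶜ)
    · rintro Q hQ
      simp only [Finset.mem_coe, Finset.mem_filter, Finset.mem_univ, true_and] at hQ
      obtain ⟨⟨hQc, heQ⟩, hIQ⟩ := hQ
      have hQcc : Qᶜ.card = r := by rw [Finset.card_compl, hQc]; simp
      rw [Finset.mem_coe, Finset.mem_powersetCard]
      constructor
      · exact Finset.sdiff_subset_sdiff (Finset.compl_subset_compl.mpr heQ) le_rfl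
      · rw [Finset.card_sdiff_of_subset hIQ, hQcc]
    · rintro A hA
      rw [Finset.mem_coe, Finset.mem_powersetCard] at hA
      obtain ⟨hAsub, hAcard⟩ := hA
      have hdisj : Disjoint A I :=
        Finset.disjoint_left.mpr fun x hx => (Finset.mem_sdiff.mp (hAsub hx)).2
      have hAI : (A ∪ I).card = r := by
        rw [Finset.card_union_of_disjoint hdisj, hAcard]
        omega
      simp only [Finset.mem_coe, Finset.mem_filter, Finset.mem_univ, true_and]
      refine ⟨⟨?_, ?_⟩, ?_⟩
      · rw [Finset.card_compl, hAI]; simp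
      · have hsub : A ∪ I ⊆ eᶜ :=
          Finset.union_subset (hAsub.trans Finset.sdiff_subset) hIe
        have h2 := Finset.compl_subset_compl.mpr hsub
        rwa [compl_compl] at h2
      · rw [compl_compl]
        exact Finset.subset_union_right
    · intro Q hQ
      simp only [Finset.mem_coe, Finset.mem_filter, Finset.mem_univ, true_and] at hQ
      beta_reduce
      rw [Finset.sdiff_union_of_subset hQ.2, compl_compl]
    · intro A hA
      rw [Finset.mem_coe, Finset.mem_powersetCard] at hA
      have hdisj : Disjoint A I := by
        exact Finset.disjoint_left.mpr fun x hx => by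
          have := hA.1 hx
          rw [Finset.mem_sdiff] at this
          exact this.2
      beta_reduce
      rw [compl_compl, Finset.union_sdiff_right, Finset.sdiff_eq_self_of_disjoint hdisj]
  have hcount0 : ∀ I : Finset (Fin (q + r)), ¬(I ⊆ eᶜ ∧ I.card ≤ r) →
      (univ.filter (fun Q : Finset (Fin (q + r)) =>
        (Q.card = q ∧ e ⊆ Q) ∧ I ⊆ Qᶜ)).card = 0 := by
    intro I hI
    rw [Finset.card_eq_zero]
    apply Finset.filter_false_of_mem
    rintro Q - ⟨⟨hQc, heQ⟩, hIQ⟩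
    have hQcc : Qᶜ.card = r := by rw [Finset.card_compl, hQc]; simp
    apply hI
    constructor
    · exact hIQ.trans (Finset.compl_subset_compl.mpr heQ)
    · have := Finset.card_le_card hIQ; omega
  calc
    ∑ Q ∈ univ.filter (fun Q : Finset (Fin (q + r)) => Q.card = q ∧ e ⊆ Q),
        ∑ I ∈ Qᶜ.powerset, (-1 : ℤ) ^ I.card * T I
      = ∑ Q ∈ univ, ∑ I ∈ univ,
          (if (Q.card = q ∧ e ⊆ Q) ∧ I ⊆ Qᶜ then (-1 : ℤ) ^ I.card * T I else 0) := by
        rw [Finset.sum_filter]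
        refine Finset.sum_congr rfl fun Q _ => ?_
        by_cases hP : Q.card = q ∧ e ⊆ Q
        · simp only [hP, true_and, if_true]
          rw [← Finset.sum_filter]
          apply Finset.sum_congr _ (fun _ _ => rfl)
          ext I
          simp [Finset.mem_powerset]
        · simp [hP]
    _ = ∑ I ∈ univ, ((univ.filter (fun Q : Finset (Fin (q + r)) =>
          (Q.card = q ∧ e ⊆ Q) ∧ I ⊆ Qᶜ)).card : ℤ) * ((-1 : ℤ) ^ I.card * T I) := by
        rw [Finset.sum_comm]
        refine Finset.sum_congr rfl fun I _ => ?_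
        rw [← Finset.sum_filter, Finset.sum_const, nsmul_eq_mul]
    _ = ∑ I ∈ univ, (if I ⊆ eᶜ then (-1 : ℤ) ^ I.card * S I else 0) := by
        refine Finset.sum_congr rfl fun I _ => ?_
        by_cases h1 : I ⊆ eᶜ
        · by_cases h2 : I.card ≤ r
          · rw [hcount I h1 h2, if_pos h1, hT I]
            ring
          · rw [hcount0 I (by tauto), if_pos h1, hSzero I (by omega)]
            ring
        · rw [hcount0 I (by tauto), if_neg h1]
          ring
    _ = ∑ I ∈ univ, ∑ e' ∈ univ,
          (if (e'.card = r ∧ I ⊆ e') ∧ I ⊆ eᶜ then (-1 : ℤ) ^ I.card * J e' else 0) := by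
        refine Finset.sum_congr rfl fun I _ => ?_
        by_cases h1 : I ⊆ eᶜ
        · simp only [h1, and_true, if_pos]
          rw [hSdef]
          simp only
          rw [Finset.mul_sum, Finset.sum_filter]
        · simp [h1]
    _ = ∑ e' ∈ univ.filter (fun e' : Finset (Fin (q + r)) => e'.card = r),
          J e' * (∑ I ∈ (eᶜ ∩ e').powerset, (-1 : ℤ) ^ I.card) := by
        rw [Finset.sum_comm, Finset.sum_filter]
        refine Finset.sum_congr rfl fun e' _ => ?_
        by_cases hc : e'.card = r
        · simp only [hc, true_and, if_true]
          rw [Finset.mul_sum, ← Finset.sum_filter]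
          apply Finset.sum_nbij' (fun I => I) (fun I => I)
          · intro I hI
            simp only [Finset.mem_filter, Finset.mem_univ, true_and] at hI
            rw [Finset.mem_powerset, Finset.subset_inter_iff]
            exact ⟨hI.2, hI.1⟩
          · intro I hI
            rw [Finset.mem_powerset, Finset.subset_inter_iff] at hI
            simp only [Finset.mem_filter, Finset.mem_univ, true_and]
            exact ⟨hI.2, hI.1⟩
          · intros; rfl
          · intros; rfl
          · intro I hI
            ring
        · simp [hc]
    _ = J e := by
        have key : ∀ e' : Finset (Fin (q + r)), e'.card = r →
            (∑ I ∈ (eᶜ ∩ e').powerset, (-1 : ℤ) ^ I.card) = if e' = e then 1 else 0 := by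
          intro e' he'
          rw [Finset.sum_powerset_neg_one_pow_card]
          congr 1
          simp only [eq_iff_iff]
          constructor
          · intro h
            have hsub : e' ⊆ e := by
              intro x hx
              by_contra hxe
              have : x ∈ eᶜ ∩ e' := by
                rw [Finset.mem_inter, Finset.mem_compl]
                exact ⟨hxe, hx⟩
              rw [h] at this
              exact absurd this (Finset.notMem_empty x)
            exact Finset.eq_of_subset_of_card_le hsub (by rw [he, he'])
          · intro h
            rw [h]
            ext x
            simp
        rw [Finset.sum_congr rfl (fun e' he' => by
          rw [key e' (Finset.mem_filter.mp he').2])]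
        rw [Finset.sum_eq_single e]
        · simp
        · intro b _ hne; simp [hne]
        · intro h; exact absurd (Finset.mem_filter.mpr ⟨Finset.mem_univ e, he⟩) h
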